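/- Let (𝒜, φ) be a non-commutative probability space and, for each N ≥ 1, let a_1, …, a_N and b_1, …, b_N be elements of 𝒜 with φ(a_i) = φ(b_i) = 0, φ(a_i²) = φ(b_i²) = 1, and uniformly bounded moments of all orders. Suppose a_1, …, a_N are BMT independent with respect to a digraph G_N = ([N], E(G_N)) and b_1, …, b_N are BMT independent with respect to a digraph H_N = ([N], E(H_N)). If the symmetric difference of the edge sets satisfies |E(G_N) Δ E(H_N)| / N² → 0 as N → ∞, then for every integer m ≥ 1, lim_{N→∞} [ φ(((a_1 + ⋯ + a_N)/√N)^m) − φ(((b_1 + ⋯ + b_N)/√N)^m) ] = 0. -/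

import Mathlib

open scoped Classical
open Filter

noncomputable section

/-- The relation defining the kernel of `f` restricted to the index set `S`,
subordinated to the digraph with edge relation `E`: `k ∼ k'` iff `f k = f k'` and
every `l ∈ S` strictly between `k` and `k'` with `f l ≠ f k` satisfies `(f l, f k) ∈ E`. -/
def kerGRelOn {m : ℕ} {V : Type*} (E : V → V → Prop) (f : Fin m → V)
    (S : Finset (Fin m)) (k k' : Fin m) : Prop :=
  f k = f k' ∧ ∀ l ∈ S, min k k' < l → l < max k k' → f l ≠ f k → E (f l) (f k)

/-- The blocks of the kernel of `f|_S` subordinated to the digraph `E`. -/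
def kerGBlocks {m : ℕ} {V : Type*} (E : V → V → Prop) (f : Fin m → V)
    (S : Finset (Fin m)) : Finset (Finset (Fin m)) :=
  S.image fun k => S.filter fun k' => kerGRelOn E f S k k'

/-- The blocks of the plain kernel `ker[f]` of `f : [m] → V`. -/
def kerBlocks {m : ℕ} {V : Type*} (f : Fin m → V) : Finset (Finset (Fin m)) :=
  Finset.univ.image fun k => Finset.univ.filter fun k' => f k = f k'

/-- The product of `a k` for `k ∈ B`, taken in increasing order of `k`. -/
def blockProd {A : Type*} [Monoid A] {m : ℕ} (a : Fin m → A) (B : Finset (Fin m)) : A :=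
  ((B.sort (· ≤ ·)).map a).prod

/-- The edge set of the nesting-crossing graph of the partition `π`, relabeled along `f`:
the pair `(f-label of B, f-label of C)` is an edge whenever `B ≠ C` are blocks of `π` and
some `l ∈ B` lies strictly between two elements (equivalently, between min and max) of `C`. -/
def nestCrossEdges {m : ℕ} {V : Type*} (π : Finset (Finset (Fin m))) (f : Fin m → V) :
    Set (V × V) :=
  { p | ∃ B ∈ π, ∃ C ∈ π, B ≠ C ∧
      (∃ l ∈ B, ∃ c₁ ∈ C, ∃ c₂ ∈ C, c₁ < l ∧ l < c₂) ∧
      (∃ k ∈ B, f k = p.1) ∧ (∃ k' ∈ C, f k' = p.2) }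

/-- A family of (non-unital) subalgebras of a non-commutative probability space `(𝒜, φ)`
is BMT independent with respect to the digraph `E` on the index set `I`. -/
def BMTIndep {𝒜 : Type*} [Ring 𝒜] [Algebra ℂ 𝒜] (φ : 𝒜 →ₗ[ℂ] ℂ)
    {I : Type*} (E : I → I → Prop) (A : I → NonUnitalSubalgebra ℂ 𝒜) : Prop :=
  ∀ (m : ℕ), 1 ≤ m → ∀ (idx : Fin m → I) (a : Fin m → 𝒜),
    (∀ k, a k ∈ A (idx k)) →
    φ (List.ofFn a).prod = ∏ B ∈ kerGBlocks E idx Finset.univ, φ (blockProd a B)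

/-- Random variables `a 0, …, a (N-1)` are BMT independent with respect to the digraph `E`. -/
def BMTIndepVars {𝒜 : Type*} [Ring 𝒜] [Algebra ℂ 𝒜] (φ : 𝒜 →ₗ[ℂ] ℂ)
    {N : ℕ} (E : Fin N → Fin N → Prop) (a : Fin N → 𝒜) : Prop :=
  ∀ (m : ℕ) (idx : Fin m → Fin N),
    φ (List.ofFn fun k => a (idx k)).prod
      = ∏ B ∈ kerGBlocks E idx Finset.univ, φ (blockProd (fun k => a (idx k)) B)


section rel
variable {m : ℕ} {V : Type*} {E : V → V → Prop} {f : Fin m → V}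

private lemma between_cases {α : Type*} [LinearOrder α] {k k' k'' l : α}
    (h1 : min k k'' < l) (h2 : l < max k k'') :
    l = k' ∨ (min k k' < l ∧ l < max k k') ∨ (min k' k'' < l ∧ l < max k' k'') := by
  rcases lt_trichotomy l k' with h | h | h
  · rcases min_lt_iff.mp h1 with hk | hk
    · exact Or.inr (Or.inl ⟨min_lt_iff.mpr (Or.inl hk), lt_max_iff.mpr (Or.inr h)⟩)
    · exact Or.inr (Or.inr ⟨min_lt_iff.mpr (Or.inr hk), lt_max_iff.mpr (Or.inl h)⟩)
  · exact Or.inl h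
  · rcases lt_max_iff.mp h2 with hk | hk
    · exact Or.inr (Or.inl ⟨min_lt_iff.mpr (Or.inr h), lt_max_iff.mpr (Or.inl hk)⟩)
    · exact Or.inr (Or.inr ⟨min_lt_iff.mpr (Or.inl h), lt_max_iff.mpr (Or.inr hk)⟩)

lemma kerGRelOn_refl (k : Fin m) : kerGRelOn E f Finset.univ k k := by
  refine ⟨rfl, fun l _ h1 h2 _ => ?_⟩
  simp at h1 h2; exact absurd (h1.trans h2) (lt_irrefl _)

lemma kerGRelOn_symm {k k' : Fin m} (h : kerGRelOn E f Finset.univ k k') :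
    kerGRelOn E f Finset.univ k' k := by
  obtain ⟨h1, h2⟩ := h
  refine ⟨h1.symm, fun l hl ha hb hne => ?_⟩
  have ha' : min k k' < l := min_lt_iff.mpr (min_lt_iff.mp ha).symm
  have hb' : l < max k k' := lt_max_iff.mpr (lt_max_iff.mp hb).symm
  rw [← h1]
  exact h2 l hl ha' hb' (by rw [h1]; exact hne)

lemma kerGRelOn_trans {k k' k'' : Fin m} (h : kerGRelOn E f Finset.univ k k')
    (h' : kerGRelOn E f Finset.univ k' k'') : kerGRelOn E f Finset.univ k k'' := by
  obtain ⟨h1, h2⟩ := h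
  obtain ⟨h1', h2'⟩ := h'
  refine ⟨h1.trans h1', fun l hl ha hb hne => ?_⟩
  rcases between_cases (k' := k') ha hb with h | ⟨ha', hb'⟩ | ⟨ha', hb'⟩
  · exact absurd (by rw [h, ← h1]) hne
  · exact h2 l hl ha' hb' hne
  · have := h2' l hl ha' hb' (by rw [← h1]; exact hne)
    rwa [← h1] at this
end rel
section blocks
variable {m : ℕ} {V : Type*} [DecidableEq V] (E : V → V → Prop) (f : Fin m → V)

def blockOf (k : Fin m) : Finset (Fin m) :=
  Finset.univ.filter fun k' => kerGRelOn E f Finset.univ k k'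

variable {E f}

lemma mem_blockOf_iff {k k' : Fin m} : k' ∈ blockOf E f k ↔ kerGRelOn E f Finset.univ k k' := by
  simp [blockOf]

lemma self_mem_blockOf (k : Fin m) : k ∈ blockOf E f k :=
  mem_blockOf_iff.mpr (kerGRelOn_refl k)

lemma blockOf_eq_of_rel {k k' : Fin m} (h : kerGRelOn E f Finset.univ k k') :
    blockOf E f k = blockOf E f k' := by
  ext j
  simp only [mem_blockOf_iff]
  exact ⟨fun hj => kerGRelOn_trans (kerGRelOn_symm h) hj, fun hj => kerGRelOn_trans h hj⟩

lemma blockOf_eq_of_mem {k k' : Fin m} (h : k' ∈ blockOf E f k) :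
    blockOf E f k = blockOf E f k' :=
  blockOf_eq_of_rel (mem_blockOf_iff.mp h)

lemma mem_kerGBlocks_iff {B : Finset (Fin m)} :
    B ∈ kerGBlocks E f Finset.univ ↔ ∃ k, B = blockOf E f k := by
  simp only [kerGBlocks, Finset.mem_image, Finset.mem_univ, true_and]
  exact ⟨fun ⟨k, hk⟩ => ⟨k, hk.symm⟩, fun ⟨k, hk⟩ => ⟨k, hk.symm⟩⟩

lemma blockOf_mem (k : Fin m) : blockOf E f k ∈ kerGBlocks E f Finset.univ :=
  mem_kerGBlocks_iff.mpr ⟨k, rfl⟩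

lemma blocks_nonempty {B : Finset (Fin m)} (hB : B ∈ kerGBlocks E f Finset.univ) :
    B.Nonempty := by
  obtain ⟨k, rfl⟩ := mem_kerGBlocks_iff.mp hB
  exact ⟨k, self_mem_blockOf k⟩

lemma f_const_on_block {k k' : Fin m} (h : k' ∈ blockOf E f k) : f k' = f k :=
  ((mem_blockOf_iff.mp h).1).symm

lemma blockOf_filter_eq {B : Finset (Fin m)} (hB : B ∈ kerGBlocks E f Finset.univ) :
    (Finset.univ.filter fun k => blockOf E f k = B) = B := by
  obtain ⟨j, rfl⟩ := mem_kerGBlocks_iff.mp hB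
  ext k
  simp only [Finset.mem_filter, Finset.mem_univ, true_and]
  constructor
  · intro h; rw [← h]; exact self_mem_blockOf k
  · intro h; exact (blockOf_eq_of_mem h).symm

lemma sum_card_blocks : ∑ B ∈ kerGBlocks E f Finset.univ, B.card = m := by
  have h := Finset.card_eq_sum_card_fiberwise (s := (Finset.univ : Finset (Fin m)))
    (t := kerGBlocks E f Finset.univ) (f := blockOf E f) (fun x _ => blockOf_mem x)
  have h2 : ∑ B ∈ kerGBlocks E f Finset.univ, B.card
      = ∑ B ∈ kerGBlocks E f Finset.univ, (Finset.univ.filter fun x => blockOf E f x = B).card :=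
    Finset.sum_congr rfl fun B hB => by rw [blockOf_filter_eq hB]
  rw [h2, ← h, Finset.card_univ, Fintype.card_fin]

lemma card_blocks_le : (kerGBlocks E f Finset.univ).card ≤ m := by
  have h1 : (kerGBlocks E f Finset.univ).card = ∑ B ∈ kerGBlocks E f Finset.univ, 1 := by simp
  have h2 : ∑ B ∈ kerGBlocks E f Finset.univ, 1 ≤ ∑ B ∈ kerGBlocks E f Finset.univ, B.card :=
    Finset.sum_le_sum fun B hB => Nat.one_le_iff_ne_zero.mpr
      (Finset.card_ne_zero_of_mem (blocks_nonempty hB).choose_spec)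
  rw [h1]; calc ∑ B ∈ kerGBlocks E f Finset.univ, 1 ≤ _ := h2
    _ = m := sum_card_blocks

lemma card_image_le_card_blocks (hm : 0 < m) :
    (Finset.univ.image f).card ≤ (kerGBlocks E f Finset.univ).card := by
  apply Finset.card_le_card_of_surjOn
    (fun B => if h : B.Nonempty then f (B.min' h) else f ⟨0, hm⟩)
  intro v hv
  obtain ⟨k, _, rfl⟩ := Finset.mem_image.mp hv
  refine ⟨blockOf E f k, blockOf_mem k, ?_⟩
  have hne : (blockOf E f k).Nonempty := ⟨k, self_mem_blockOf k⟩
  simp only [dif_pos hne]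
  exact f_const_on_block (Finset.min'_mem _ hne)

/-- If every block has at least 2 elements and the number of distinct values is
maximal (`2 * r = m`), then every block has exactly 2 elements and distinct blocks
carry distinct values (so blocks = fibers). -/
lemma pairGood_structure (hm : 0 < m)
    (h2 : ∀ B ∈ kerGBlocks E f Finset.univ, 2 ≤ B.card)
    (hr : 2 * (Finset.univ.image f).card = m) :
    (∀ B ∈ kerGBlocks E f Finset.univ, B.card = 2) ∧
    (∀ k k', f k = f k' → blockOf E f k = blockOf E f k') := by
  set π := kerGBlocks E f Finset.univ with hπ
  have hsum : ∑ B ∈ π, B.card = m := sum_card_blocks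
  have hcard2 : 2 * π.card ≤ m := by
    calc 2 * π.card = ∑ B ∈ π, 2 := by rw [Finset.sum_const, smul_eq_mul, mul_comm]
    _ ≤ ∑ B ∈ π, B.card := Finset.sum_le_sum h2
    _ = m := hsum
  have hrle : (Finset.univ.image f).card ≤ π.card := card_image_le_card_blocks hm
  have hπcard : π.card = (Finset.univ.image f).card := le_antisymm (by omega) hrle
  have hall : ∀ B ∈ π, B.card = 2 := by
    intro B hB
    by_contra hne
    have hlt : 2 < B.card := lt_of_le_of_ne (h2 B hB) (Ne.symm hne)
    have : ∑ B ∈ π, 2 < ∑ B ∈ π, B.card :=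
      Finset.sum_lt_sum (fun C hC => h2 C hC) ⟨B, hB, hlt⟩
    rw [Finset.sum_const, smul_eq_mul, mul_comm, hsum] at this
    omega
  refine ⟨hall, ?_⟩
  -- injectivity of the value map on blocks
  have hmaps : ∀ B ∈ π, (if h : B.Nonempty then f (B.min' h) else f ⟨0, hm⟩) ∈
      Finset.univ.image f := by
    intro B hB
    split
    · exact Finset.mem_image_of_mem f (Finset.mem_univ _)
    · exact Finset.mem_image_of_mem f (Finset.mem_univ _)
  have himg : π.image (fun B => if h : B.Nonempty then f (B.min' h) else f ⟨0, hm⟩)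
      = Finset.univ.image f := by
    apply Finset.Subset.antisymm
    · intro v hv
      obtain ⟨B, hB, rfl⟩ := Finset.mem_image.mp hv
      exact hmaps B hB
    · intro v hv
      obtain ⟨k, _, rfl⟩ := Finset.mem_image.mp hv
      apply Finset.mem_image.mpr
      refine ⟨blockOf E f k, blockOf_mem k, ?_⟩
      have hne : (blockOf E f k).Nonempty := ⟨k, self_mem_blockOf k⟩
      simp only [dif_pos hne]
      exact f_const_on_block (Finset.min'_mem _ hne)
  have hinj : Set.InjOn (fun B : Finset (Fin m) => if h : B.Nonempty then f (B.min' h) else f ⟨0, hm⟩) π :=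
    Finset.injOn_of_card_image_eq (by rw [himg, ← hπcard])
  intro k k' hf
  have hk : blockOf E f k ∈ π := blockOf_mem k
  have hk' : blockOf E f k' ∈ π := blockOf_mem k'
  apply hinj hk hk'
  have hn1 : (blockOf E f k).Nonempty := ⟨k, self_mem_blockOf k⟩
  have hn2 : (blockOf E f k').Nonempty := ⟨k', self_mem_blockOf k'⟩
  simp only [dif_pos hn1, dif_pos hn2]
  rw [f_const_on_block (Finset.min'_mem _ hn1), f_const_on_block (Finset.min'_mem _ hn2)]
  exact hf

end blocks
lemma blockProd_const {A : Type*} [Monoid A] {m : ℕ} {a : Fin m → A} {B : Finset (Fin m)}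
    {y : A} (h : ∀ k ∈ B, a k = y) : blockProd a B = y ^ B.card := by
  unfold blockProd
  have : (B.sort (· ≤ ·)).map a = List.replicate B.card y := by
    apply List.eq_replicate_iff.mpr
    constructor
    · rw [List.length_map, Finset.length_sort]
    · intro b hb
      obtain ⟨k, hk, rfl⟩ := List.mem_map.mp hb
      exact h k ((Finset.mem_sort _).mp hk)
  rw [this, List.prod_replicate]

lemma sum_pow_expand {A : Type*} [Semiring A] {N : ℕ} (x : Fin N → A) (m : ℕ) :
    (∑ i, x i) ^ m = ∑ idx : Fin m → Fin N, (List.ofFn fun k => x (idx k)).prod := by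
  induction m with
  | zero => simp
  | succ n ih =>
    rw [pow_succ', ih, Finset.mul_sum]
    have : ∀ g : Fin n → Fin N, (∑ i, x i) * (List.ofFn fun k => x (g k)).prod
        = ∑ i : Fin N, (List.ofFn fun k : Fin (n+1) => x ((Fin.cons i g : Fin (n+1) → Fin N) k)).prod := by
      intro g
      rw [Finset.sum_mul]
      apply Finset.sum_congr rfl
      intro i _
      rw [List.ofFn_succ]
      simp [Fin.cons]
    simp_rw [this]
    rw [← Finset.sum_product', Finset.univ_product_univ]
    exact Fintype.sum_equiv ((Equiv.prodComm (Fin n → Fin N) (Fin N)).trans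
      (Fin.consEquiv fun _ : Fin (n+1) => Fin N)) _ _ (fun p => by simp [Fin.consEquiv])
section counting
variable {N m s : ℕ}

lemma count_small_subsets (hN : 1 ≤ N) (s : ℕ) :
    ((Finset.univ : Finset (Finset (Fin N))).filter fun T => T.card ≤ s).card
      ≤ (s + 1) * N ^ s := by
  classical
  set F := (Finset.univ : Finset (Finset (Fin N))).filter fun T => T.card ≤ s with hF
  have h := Finset.card_eq_sum_card_fiberwise (s := F) (t := Finset.range (s + 1))
    (f := Finset.card) (fun T hT => Finset.mem_range.mpr
      (Nat.lt_succ_of_le (Finset.mem_filter.mp hT).2))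
  rw [h]
  calc ∑ t ∈ Finset.range (s + 1), (F.filter fun T => T.card = t).card
      ≤ ∑ t ∈ Finset.range (s + 1), N ^ s := by
        apply Finset.sum_le_sum
        intro t ht
        have hsub : F.filter (fun T => T.card = t) ⊆ Finset.univ.powersetCard t := by
          intro T hT
          rw [Finset.mem_powersetCard]
          exact ⟨Finset.subset_univ T, (Finset.mem_filter.mp hT).2⟩
        calc (F.filter fun T => T.card = t).card ≤ _ := Finset.card_le_card hsub
          _ = N.choose t := by rw [Finset.card_powersetCard, Finset.card_univ, Fintype.card_fin]
          _ ≤ N ^ t := Nat.choose_le_pow N t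
          _ ≤ N ^ s := Nat.pow_le_pow_right hN (Nat.lt_succ_iff.mp (Finset.mem_range.mp ht))
    _ = (s + 1) * N ^ s := by rw [Finset.sum_const, Finset.card_range, smul_eq_mul]

/-- Functions with image contained in `T` number at most `T.card ^ m`. -/
lemma count_into_subset (T : Finset (Fin N)) :
    ((Finset.univ : Finset (Fin m → Fin N)).filter fun idx => ∀ k, idx k ∈ T).card
      ≤ T.card ^ m := by
  classical
  have hsub : ((Finset.univ : Finset (Fin m → Fin N)).filter fun idx => ∀ k, idx k ∈ T)
      ⊆ Fintype.piFinset fun _ : Fin m => T := by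
    intro idx h
    rw [Fintype.mem_piFinset]
    exact (Finset.mem_filter.mp h).2
  calc _ ≤ _ := Finset.card_le_card hsub
    _ = T.card ^ m := Fintype.card_piFinset_const T m

lemma count_small_image (hN : 1 ≤ N) (s : ℕ) :
    ((Finset.univ : Finset (Fin m → Fin N)).filter
        fun idx => (Finset.univ.image idx).card ≤ s).card
      ≤ (s + 1) * N ^ s * s ^ m := by
  classical
  set F := (Finset.univ : Finset (Fin m → Fin N)).filter
    fun idx => (Finset.univ.image idx).card ≤ s with hF
  set 𝒯 := (Finset.univ : Finset (Finset (Fin N))).filter fun T => T.card ≤ s with h𝒯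
  have h := Finset.card_eq_sum_card_fiberwise (s := F) (t := 𝒯)
    (f := fun idx => Finset.univ.image idx) (fun idx h => by
      rw [h𝒯, Finset.mem_coe, Finset.mem_filter]
      exact ⟨Finset.mem_univ _, (Finset.mem_filter.mp (Finset.mem_coe.mp h)).2⟩)
  rw [h]
  calc ∑ T ∈ 𝒯, (F.filter fun idx => Finset.univ.image idx = T).card
      ≤ ∑ T ∈ 𝒯, s ^ m := by
        apply Finset.sum_le_sum
        intro T hT
        have h1 : F.filter (fun idx => Finset.univ.image idx = T)
            ⊆ (Finset.univ : Finset (Fin m → Fin N)).filter fun idx => ∀ k, idx k ∈ T := by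
          intro idx hidx
          rw [Finset.mem_filter]
          refine ⟨Finset.mem_univ _, fun k => ?_⟩
          rw [← (Finset.mem_filter.mp hidx).2]
          exact Finset.mem_image_of_mem idx (Finset.mem_univ k)
        calc _ ≤ _ := Finset.card_le_card h1
          _ ≤ T.card ^ m := count_into_subset T
          _ ≤ s ^ m := Nat.pow_le_pow_left (Finset.mem_filter.mp hT).2 m
    _ = 𝒯.card * s ^ m := by rw [Finset.sum_const, smul_eq_mul]
    _ ≤ ((s + 1) * N ^ s) * s ^ m :=
        Nat.mul_le_mul_right _ (count_small_subsets hN s)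

lemma count_small_image_with (hN : 1 ≤ N) (s : ℕ) {u v : Fin N} (huv : u ≠ v) :
    ((Finset.univ : Finset (Fin m → Fin N)).filter
        fun idx => (Finset.univ.image idx).card ≤ s ∧
          u ∈ Finset.univ.image idx ∧ v ∈ Finset.univ.image idx).card
      ≤ (s + 1) * N ^ (s - 2) * s ^ m := by
  classical
  set F := (Finset.univ : Finset (Fin m → Fin N)).filter
    fun idx => (Finset.univ.image idx).card ≤ s ∧
      u ∈ Finset.univ.image idx ∧ v ∈ Finset.univ.image idx with hF
  set 𝒯 := (Finset.univ : Finset (Finset (Fin N))).filter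
    fun T => T.card ≤ s ∧ u ∈ T ∧ v ∈ T with h𝒯
  -- number of admissible images
  have h𝒯card : 𝒯.card ≤ (s + 1) * N ^ (s - 2) := by
    have hinj : Set.InjOn (fun T : Finset (Fin N) => (T.erase u).erase v) 𝒯 := by
      intro T₁ h₁ T₂ h₂ hEq
      obtain ⟨-, hu₁, hv₁⟩ := (Finset.mem_filter.mp h₁).2
      obtain ⟨-, hu₂, hv₂⟩ := (Finset.mem_filter.mp h₂).2
      ext x
      by_cases hx : x = u
      · subst hx; simp [hu₁, hu₂]
      by_cases hx' : x = v
      · subst hx'; simp [hv₁, hv₂]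
      · have := congrArg (x ∈ ·) hEq
        simpa [Finset.mem_erase, hx, hx'] using this
    have hmaps : ∀ T ∈ 𝒯, (T.erase u).erase v ∈
        (Finset.univ : Finset (Finset (Fin N))).filter fun S => S.card ≤ s - 2 := by
      intro T hT
      obtain ⟨hc, hu, hv⟩ := (Finset.mem_filter.mp hT).2
      rw [Finset.mem_filter]
      refine ⟨Finset.mem_univ _, ?_⟩
      have h1 : ((T.erase u).erase v).card = T.card - 2 := by
        rw [Finset.card_erase_of_mem, Finset.card_erase_of_mem hu]
        · omega
        · exact Finset.mem_erase.mpr ⟨huv.symm, hv⟩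
      omega
    calc 𝒯.card ≤ _ := Finset.card_le_card_of_injOn _ hmaps hinj
      _ ≤ (s - 2 + 1) * N ^ (s - 2) := count_small_subsets hN (s - 2)
      _ ≤ (s + 1) * N ^ (s - 2) := Nat.mul_le_mul_right _ (by omega)
  have h := Finset.card_eq_sum_card_fiberwise (s := F) (t := 𝒯)
    (f := fun idx => Finset.univ.image idx) (fun idx h => by
      rw [h𝒯, Finset.mem_coe, Finset.mem_filter]
      obtain ⟨h1, h2, h3⟩ := (Finset.mem_filter.mp (Finset.mem_coe.mp h)).2
      exact ⟨Finset.mem_univ _, h1, h2, h3⟩)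
  rw [h]
  calc ∑ T ∈ 𝒯, (F.filter fun idx => Finset.univ.image idx = T).card
      ≤ ∑ T ∈ 𝒯, s ^ m := by
        apply Finset.sum_le_sum
        intro T hT
        have h1 : F.filter (fun idx => Finset.univ.image idx = T)
            ⊆ (Finset.univ : Finset (Fin m → Fin N)).filter fun idx => ∀ k, idx k ∈ T := by
          intro idx hidx
          rw [Finset.mem_filter]
          refine ⟨Finset.mem_univ _, fun k => ?_⟩
          rw [← (Finset.mem_filter.mp hidx).2]
          exact Finset.mem_image_of_mem idx (Finset.mem_univ k)
        calc _ ≤ _ := Finset.card_le_card h1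
          _ ≤ T.card ^ m := count_into_subset T
          _ ≤ s ^ m := Nat.pow_le_pow_left (Finset.mem_filter.mp hT).2.1 m
    _ = 𝒯.card * s ^ m := by rw [Finset.sum_const, smul_eq_mul]
    _ ≤ ((s + 1) * N ^ (s - 2)) * s ^ m := Nat.mul_le_mul_right _ h𝒯card

end counting

section terms
variable {𝒜 : Type*} [Ring 𝒜] [Algebra ℂ 𝒜] (φ : 𝒜 →ₗ[ℂ] ℂ)
variable {N m : ℕ} (E : Fin N → Fin N → Prop) (x : Fin N → 𝒜) (idx : Fin m → Fin N)

/-- The value of one term in the moment expansion, after applying BMT independence. -/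
def termVal : ℂ :=
  ∏ B ∈ kerGBlocks E idx Finset.univ, φ (blockProd (fun k => x (idx k)) B)

variable {E idx}

lemma idx_const_on_block {B : Finset (Fin m)} (hB : B ∈ kerGBlocks E idx Finset.univ)
    {k k' : Fin m} (hk : k ∈ B) (hk' : k' ∈ B) : idx k = idx k' := by
  obtain ⟨j, rfl⟩ := mem_kerGBlocks_iff.mp hB
  rw [f_const_on_block hk, f_const_on_block hk']

lemma blockProd_eq_pow {B : Finset (Fin m)} (hB : B ∈ kerGBlocks E idx Finset.univ)
    {k₀ : Fin m} (hk₀ : k₀ ∈ B) :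
    blockProd (fun k => x (idx k)) B = x (idx k₀) ^ B.card :=
  blockProd_const fun k hk => by rw [idx_const_on_block hB hk hk₀]

/-- If some block is a singleton, the term vanishes. -/
lemma termVal_eq_zero (hmean : ∀ i, φ (x i) = 0)
    (h : ¬ ∀ B ∈ kerGBlocks E idx Finset.univ, 2 ≤ B.card) :
    termVal φ E x idx = 0 := by
  push_neg at h
  obtain ⟨B, hB, hcard⟩ := h
  obtain ⟨k₀, hk₀⟩ := blocks_nonempty hB
  have hc1 : B.card = 1 := le_antisymm (by omega) (Finset.card_pos.mpr ⟨k₀, hk₀⟩)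
  apply Finset.prod_eq_zero hB
  rw [blockProd_eq_pow (x := x) hB hk₀, hc1, pow_one, hmean]

/-- If the idx is "pair good", the term equals 1. -/
lemma termVal_eq_one (hm : 0 < m) (hvar : ∀ i, φ (x i * x i) = 1)
    (h2 : ∀ B ∈ kerGBlocks E idx Finset.univ, 2 ≤ B.card)
    (hr : 2 * (Finset.univ.image idx).card = m) :
    termVal φ E x idx = 1 := by
  have hall := (pairGood_structure hm h2 hr).1
  apply Finset.prod_eq_one
  intro B hB
  obtain ⟨k₀, hk₀⟩ := blocks_nonempty hB
  rw [blockProd_eq_pow (x := x) hB hk₀, hall B hB, pow_two, hvar]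

/-- Uniform bound on the term value. -/
lemma termVal_bound {D : ℝ} (hD : 1 ≤ D)
    (hmom : ∀ i (n : ℕ), n ≤ m → ‖φ (x i ^ n)‖ ≤ D) :
    ‖termVal φ E x idx‖ ≤ D ^ m := by
  unfold termVal
  rw [norm_prod]
  calc ∏ B ∈ kerGBlocks E idx Finset.univ, ‖φ (blockProd (fun k => x (idx k)) B)‖
      ≤ ∏ B ∈ kerGBlocks E idx Finset.univ, D := by
        apply Finset.prod_le_prod
        · intro B _; exact norm_nonneg _
        · intro B hB
          obtain ⟨k₀, hk₀⟩ := blocks_nonempty hB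
          rw [blockProd_eq_pow (x := x) hB hk₀]
          apply hmom
          calc B.card ≤ ∑ C ∈ kerGBlocks E idx Finset.univ, C.card :=
                Finset.single_le_sum (fun C _ => Nat.zero_le _) hB
            _ = m := sum_card_blocks
    _ = D ^ (kerGBlocks E idx Finset.univ).card := by rw [Finset.prod_const]
    _ ≤ D ^ m := pow_le_pow_right₀ hD card_blocks_le

/-- If all blocks have size ≥ 2 then `2r ≤ m`. -/
lemma two_r_le_m (hm : 0 < m) (h2 : ∀ B ∈ kerGBlocks E idx Finset.univ, 2 ≤ B.card) :
    2 * (Finset.univ.image idx).card ≤ m := by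
  have h1 : (Finset.univ.image idx).card ≤ (kerGBlocks E idx Finset.univ).card :=
    card_image_le_card_blocks hm
  have h3 : 2 * (kerGBlocks E idx Finset.univ).card ≤ m := by
    calc 2 * (kerGBlocks E idx Finset.univ).card = ∑ B ∈ kerGBlocks E idx Finset.univ, 2 := by
          rw [Finset.sum_const, smul_eq_mul, mul_comm]
      _ ≤ ∑ B ∈ kerGBlocks E idx Finset.univ, B.card := Finset.sum_le_sum h2
      _ = m := sum_card_blocks
  omega

end terms
section goodsets
variable {N m : ℕ}

/-- The set of "good" index functions for graph `E`: all kernel blocks have ≥ 2 elements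
and the number of distinct values is maximal. -/
def goodSet (E : Fin N → Fin N → Prop) (m : ℕ) : Finset (Fin m → Fin N) :=
  Finset.univ.filter fun idx =>
    (∀ B ∈ kerGBlocks E idx Finset.univ, 2 ≤ B.card) ∧
    2 * (Finset.univ.image idx).card = m

/-- Key witness extraction: if `idx` is good for `EG` but not good for `EH`, there is an
edge of `EG` missing from `EH` whose endpoints are distinct values of `idx`. -/
lemma good_witness (hm : 0 < m) {EG EH : Fin N → Fin N → Prop}
    {idx : Fin m → Fin N}
    (hG : idx ∈ goodSet EG m) (hH : idx ∉ goodSet EH m) :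
    ∃ u v : Fin N, u ≠ v ∧ EG u v ∧ ¬ EH u v ∧
      u ∈ Finset.univ.image idx ∧ v ∈ Finset.univ.image idx := by
  rw [goodSet, Finset.mem_filter] at hG hH
  obtain ⟨-, h2G, hr⟩ := hG
  have hnH : ¬ ∀ B ∈ kerGBlocks EH idx Finset.univ, 2 ≤ B.card := by
    intro h
    exact hH ⟨Finset.mem_univ _, h, hr⟩
  obtain ⟨hall, hinj⟩ := pairGood_structure hm h2G hr
  -- a singleton block for EH
  push_neg at hnH
  obtain ⟨B, hB, hBcard⟩ := hnH
  obtain ⟨k₀, hk₀⟩ := blocks_nonempty hB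
  have hBsingle : B = {k₀} := by
    have : B.card = 1 := le_antisymm (by omega) (Finset.card_pos.mpr ⟨k₀, hk₀⟩)
    obtain ⟨j, hj⟩ := Finset.card_eq_one.mp this
    rw [hj] at hk₀ ⊢
    rw [Finset.mem_singleton.mp hk₀]
  obtain ⟨j, hBj⟩ := mem_kerGBlocks_iff.mp hB
  have hBk₀ : B = blockOf EH idx k₀ := by
    rw [hBj]; exact blockOf_eq_of_mem (hBj ▸ hk₀)
  -- the G-block of k₀ has two elements
  have hGcard : (blockOf EG idx k₀).card = 2 := hall _ (blockOf_mem k₀)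
  obtain ⟨k₁, hk₁mem, hk₁ne⟩ : ∃ k₁ ∈ blockOf EG idx k₀, k₁ ≠ k₀ := by
    have h1 : ({k₀} : Finset (Fin m)) ⊂ blockOf EG idx k₀ := by
      rw [Finset.ssubset_iff_of_subset]
      · obtain ⟨y, hy, hy'⟩ := Finset.exists_mem_ne
          (show 1 < (blockOf EG idx k₀).card by omega) k₀
        exact ⟨y, hy, by simpa using hy'⟩
      · intro z hz; rw [Finset.mem_singleton.mp hz]; exact self_mem_blockOf k₀
    obtain ⟨y, hy, hy'⟩ := Finset.exists_of_ssubset h1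
    exact ⟨y, hy, by simpa using hy'⟩
  have hval : idx k₀ = idx k₁ := (f_const_on_block hk₁mem).symm
  -- k₁ is not EH-related to k₀
  have hnotrel : ¬ kerGRelOn EH idx Finset.univ k₀ k₁ := by
    intro hrel
    have : k₁ ∈ B := by rw [hBk₀]; exact mem_blockOf_iff.mpr hrel
    rw [hBsingle] at this
    exact hk₁ne (Finset.mem_singleton.mp this)
  rw [kerGRelOn] at hnotrel
  push_neg at hnotrel
  obtain ⟨l, hl, hmin, hmax, hlne, hnEH⟩ := hnotrel hval
  -- but k₁ IS EG-related to k₀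
  have hrelG : kerGRelOn EG idx Finset.univ k₀ k₁ := mem_blockOf_iff.mp hk₁mem
  have hEG : EG (idx l) (idx k₀) := hrelG.2 l hl hmin hmax hlne
  exact ⟨idx l, idx k₀, hlne, hEG, hnEH,
    Finset.mem_image_of_mem idx (Finset.mem_univ l),
    Finset.mem_image_of_mem idx (Finset.mem_univ k₀)⟩

end goodsets
section decomp
variable {𝒜 : Type*} [Ring 𝒜] [Algebra ℂ 𝒜] (φ : 𝒜 →ₗ[ℂ] ℂ)
variable {N m : ℕ}

/-- The bad set: all blocks of size ≥ 2 but not maximally many values. -/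
def badSet (E : Fin N → Fin N → Prop) (m : ℕ) : Finset (Fin m → Fin N) :=
  Finset.univ.filter fun idx =>
    (∀ B ∈ kerGBlocks E idx Finset.univ, 2 ≤ B.card) ∧
    2 * (Finset.univ.image idx).card ≠ m

lemma moment_eq (E : Fin N → Fin N → Prop) (x : Fin N → 𝒜)
    (hindep : BMTIndepVars φ E x) (m : ℕ) :
    φ ((∑ i, x i) ^ m) = ∑ idx : Fin m → Fin N, termVal φ E x idx := by
  rw [sum_pow_expand, map_sum]
  exact Finset.sum_congr rfl fun idx _ => hindep m idx

lemma moment_decomp (E : Fin N → Fin N → Prop) (x : Fin N → 𝒜)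
    (hindep : BMTIndepVars φ E x) (hm : 0 < m)
    (hmean : ∀ i, φ (x i) = 0) (hvar : ∀ i, φ (x i * x i) = 1) :
    φ ((∑ i, x i) ^ m) = ((goodSet E m).card : ℂ) +
      ∑ idx ∈ badSet E m, termVal φ E x idx := by
  rw [moment_eq φ E x hindep m]
  have hsplit := Finset.sum_filter_add_sum_filter_not Finset.univ
    (fun idx : Fin m → Fin N => ∀ B ∈ kerGBlocks E idx Finset.univ, 2 ≤ B.card)
    (termVal φ E x)
  rw [← hsplit]
  have hzero : ∑ idx ∈ Finset.univ.filter
      (fun idx : Fin m → Fin N => ¬ ∀ B ∈ kerGBlocks E idx Finset.univ, 2 ≤ B.card),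
      termVal φ E x idx = 0 := by
    apply Finset.sum_eq_zero
    intro idx hidx
    exact termVal_eq_zero φ x hmean (Finset.mem_filter.mp hidx).2
  rw [hzero, add_zero]
  have hsplit2 := Finset.sum_filter_add_sum_filter_not
    (Finset.univ.filter fun idx : Fin m → Fin N =>
      ∀ B ∈ kerGBlocks E idx Finset.univ, 2 ≤ B.card)
    (fun idx => 2 * (Finset.univ.image idx).card = m)
    (termVal φ E x)
  rw [← hsplit2]
  congr 1
  · -- good part sums to its cardinality
    have hgood : (Finset.univ.filter fun idx : Fin m → Fin N =>
        ∀ B ∈ kerGBlocks E idx Finset.univ, 2 ≤ B.card).filter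
          (fun idx => 2 * (Finset.univ.image idx).card = m) = goodSet E m := by
      rw [Finset.filter_filter, goodSet]
    rw [hgood]
    rw [Finset.sum_congr rfl (fun idx hidx => termVal_eq_one φ x hm hvar
      (Finset.mem_filter.mp hidx).2.1 (Finset.mem_filter.mp hidx).2.2)]
    simp
  · congr 1
    rw [Finset.filter_filter, badSet]

lemma bad_sum_bound (E : Fin N → Fin N → Prop) (x : Fin N → 𝒜)
    (hN : 1 ≤ N) (hm : 0 < m) {D : ℝ} (hD : 1 ≤ D)
    (hmom : ∀ i (n : ℕ), n ≤ m → ‖φ (x i ^ n)‖ ≤ D) :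
    ‖∑ idx ∈ badSet E m, termVal φ E x idx‖
      ≤ (((m - 1) / 2 + 1) * N ^ ((m - 1) / 2) * ((m - 1) / 2) ^ m : ℕ) * D ^ m := by
  calc ‖∑ idx ∈ badSet E m, termVal φ E x idx‖
      ≤ ∑ idx ∈ badSet E m, ‖termVal φ E x idx‖ := norm_sum_le _ _
    _ ≤ ∑ idx ∈ badSet E m, D ^ m :=
        Finset.sum_le_sum fun idx _ => termVal_bound φ x hD (hmom)
    _ = (badSet E m).card * D ^ m := by rw [Finset.sum_const, nsmul_eq_mul]
    _ ≤ _ := by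
        apply mul_le_mul_of_nonneg_right _ (le_of_lt (pow_pos (lt_of_lt_of_le one_pos hD) m))
        have hsub : badSet E m ⊆ Finset.univ.filter
            (fun idx : Fin m → Fin N => (Finset.univ.image idx).card ≤ (m - 1) / 2) := by
          intro idx hidx
          obtain ⟨h2, hne⟩ := (Finset.mem_filter.mp hidx).2
          rw [Finset.mem_filter]
          refine ⟨Finset.mem_univ _, ?_⟩
          have := two_r_le_m hm h2
          omega
        have := Finset.card_le_card hsub
        have hcount := count_small_image (m := m) hN ((m - 1) / 2)
        exact_mod_cast le_trans (Nat.cast_le.mpr this) (Nat.cast_le.mpr hcount)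

/-- Counting the difference of the two good sets. -/
lemma goodSet_sdiff_card (hm : 0 < m) (hN : 1 ≤ N) {E₁ E₂ : Fin N → Fin N → Prop}
    (Δ : Finset (Fin N × Fin N))
    (hΔ : ∀ u v, u ≠ v → E₁ u v → ¬ E₂ u v → (u, v) ∈ Δ)
    (hΔne : ∀ p ∈ Δ, p.1 ≠ p.2) :
    ((goodSet E₁ m) \ (goodSet E₂ m)).card
      ≤ Δ.card * ((m / 2 + 1) * N ^ (m / 2 - 2) * (m / 2) ^ m) := by
  have hsub : (goodSet E₁ m) \ (goodSet E₂ m) ⊆ Δ.biUnion fun p =>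
      Finset.univ.filter fun idx : Fin m → Fin N =>
        (Finset.univ.image idx).card ≤ m / 2 ∧
        p.1 ∈ Finset.univ.image idx ∧ p.2 ∈ Finset.univ.image idx := by
    intro idx hidx
    obtain ⟨hG, hH⟩ := Finset.mem_sdiff.mp hidx
    obtain ⟨u, v, huv, hE1, hE2, hu, hv⟩ := good_witness hm hG hH
    apply Finset.mem_biUnion.mpr
    refine ⟨(u, v), hΔ u v huv hE1 hE2, ?_⟩
    rw [Finset.mem_filter]
    refine ⟨Finset.mem_univ _, ?_, hu, hv⟩
    have hr := (Finset.mem_filter.mp (by exact hG : idx ∈ goodSet E₁ m)).2.2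
    omega
  calc ((goodSet E₁ m) \ (goodSet E₂ m)).card ≤ _ := Finset.card_le_card hsub
    _ ≤ ∑ p ∈ Δ, (Finset.univ.filter fun idx : Fin m → Fin N =>
        (Finset.univ.image idx).card ≤ m / 2 ∧
        p.1 ∈ Finset.univ.image idx ∧ p.2 ∈ Finset.univ.image idx).card :=
      Finset.card_biUnion_le
    _ ≤ ∑ p ∈ Δ, (m / 2 + 1) * N ^ (m / 2 - 2) * (m / 2) ^ m := by
        apply Finset.sum_le_sum
        intro p hp
        exact count_small_image_with hN (m / 2) (hΔne p hp)
    _ = Δ.card * ((m / 2 + 1) * N ^ (m / 2 - 2) * (m / 2) ^ m) := by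
        rw [Finset.sum_const, smul_eq_mul]

/-- For `m = 2` the kernel does not depend on the graph. -/
lemma goodSet_m2 (E₁ E₂ : Fin N → Fin N → Prop) :
    goodSet E₁ 2 = goodSet E₂ 2 := by
  have hrel : ∀ (E : Fin N → Fin N → Prop) (f : Fin 2 → Fin N) k k',
      kerGRelOn E f Finset.univ k k' ↔ f k = f k' := by
    intro E f k k'
    constructor
    · exact fun h => h.1
    · intro h
      refine ⟨h, fun l _ h1 h2 _ => ?_⟩
      have := lt_of_lt_of_le h1 (le_of_lt h2)
      have h3 : (min k k').val < l.val := h1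
      have h4 : l.val < (max k k').val := h2
      have h5 : (max k k').val < 2 := (max k k').isLt
      have h6 : (0 : ℕ) ≤ (min k k').val := Nat.zero_le _
      omega
  have hblocks : ∀ (E : Fin N → Fin N → Prop) (f : Fin 2 → Fin N),
      kerGBlocks E f Finset.univ = kerGBlocks E₂ f Finset.univ := by
    intro E f
    unfold kerGBlocks
    apply Finset.image_congr
    intro k _
    apply Finset.filter_congr
    intro k' _
    rw [hrel E, hrel E₂]
  unfold goodSet
  apply Finset.filter_congr
  intro idx _
  rw [hblocks E₁ idx]

end decomp
section ratios

lemma sqrt_pow_pos {N : ℕ} (hN : 1 ≤ N) (m : ℕ) : 0 < Real.sqrt N ^ m := by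
  apply pow_pos
  apply Real.sqrt_pos.mpr
  exact_mod_cast Nat.lt_of_lt_of_le Nat.zero_lt_one hN

lemma sqrt_ge_one {N : ℕ} (hN : 1 ≤ N) : 1 ≤ Real.sqrt N := by
  rw [show (1:ℝ) = Real.sqrt 1 by simp]
  exact Real.sqrt_le_sqrt (by exact_mod_cast hN)

lemma sqrt_pow_two_mul {N : ℕ} (s : ℕ) : Real.sqrt N ^ (2 * s) = (N : ℝ) ^ s := by
  rw [pow_mul, Real.sq_sqrt (by positivity)]

lemma ratio_bad {N m s₁ : ℕ} (hN : 1 ≤ N) (hs : 2 * s₁ + 1 ≤ m) {SA K D : ℝ}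
    (hSA : 0 ≤ SA) (hK : 0 ≤ K) (hD : 1 ≤ D) (h : SA ≤ K * N ^ s₁ * D ^ m) :
    SA / Real.sqrt N ^ m ≤ K * D ^ m / Real.sqrt N := by
  have hNpos : (0:ℝ) < (N:ℝ)^s₁ := by positivity
  have hsq1 : 1 ≤ Real.sqrt N := sqrt_ge_one hN
  have hsqpos : 0 < Real.sqrt N := lt_of_lt_of_le one_pos hsq1
  have hden : (N:ℝ)^s₁ * Real.sqrt N ≤ Real.sqrt N ^ m := by
    calc (N:ℝ)^s₁ * Real.sqrt N = Real.sqrt N ^ (2*s₁) * Real.sqrt N ^ 1 := by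
          rw [sqrt_pow_two_mul, pow_one]
      _ = Real.sqrt N ^ (2*s₁ + 1) := by rw [← pow_add]
      _ ≤ Real.sqrt N ^ m := pow_le_pow_right₀ hsq1 hs
  calc SA / Real.sqrt N ^ m ≤ (K * N^s₁ * D^m) / ((N:ℝ)^s₁ * Real.sqrt N) :=
        div_le_div₀ (by positivity) h (by positivity) hden
    _ = K * D ^ m / Real.sqrt N := by
        field_simp

lemma ratio_good {N m s₂ : ℕ} (hN : 1 ≤ N) (hm : 2 * s₂ = m) (hs : 2 ≤ s₂) {G B : ℝ}
    (hG : 0 ≤ G) (hB : 0 ≤ B) (h : G ≤ B * N ^ (s₂ - 2)) :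
    G / Real.sqrt N ^ m ≤ B / (N : ℝ) ^ 2 := by
  have hN0 : (0:ℝ) < N := by exact_mod_cast Nat.lt_of_lt_of_le Nat.zero_lt_one hN
  have hden : Real.sqrt N ^ m = (N:ℝ) ^ (s₂ - 2) * (N:ℝ) ^ 2 := by
    rw [← hm, sqrt_pow_two_mul, ← pow_add]
    congr 1
    omega
  rw [hden]
  calc G / ((N:ℝ) ^ (s₂-2) * (N:ℝ)^2) ≤ (B * N ^ (s₂-2)) / ((N:ℝ) ^ (s₂-2) * (N:ℝ)^2) :=
        div_le_div_of_nonneg_right h (by positivity) |>.trans_eq rfl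
    _ = B / (N:ℝ)^2 := by
        field_simp

lemma tendsto_inv_sqrt : Filter.Tendsto (fun N : ℕ => (Real.sqrt N)⁻¹)
    Filter.atTop (nhds 0) := by
  apply Filter.Tendsto.inv_tendsto_atTop
  apply Filter.tendsto_atTop_atTop.mpr
  intro b
  refine ⟨⌈b⌉₊ ^ 2, fun N hN => ?_⟩
  have h1 : b ≤ Real.sqrt ((⌈b⌉₊ : ℕ) ^ 2 : ℕ) := by
    push_cast
    rw [Real.sqrt_sq (by positivity)]
    exact Nat.le_ceil b
  exact h1.trans (Real.sqrt_le_sqrt (by exact_mod_cast hN))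

end ratios


set_option maxHeartbeats 1600000 in
/-- perturbation. If the symmetric difference of the independence graphs has
`o(N²)` edges, the two normalized sums have the same limiting moments. -/
theorem stmt17 {𝒜 : Type*} [Ring 𝒜] [Algebra ℂ 𝒜] (φ : 𝒜 →ₗ[ℂ] ℂ) (hφ : φ 1 = 1)
    (a b : (N : ℕ) → Fin N → 𝒜)
    (EG EH : (N : ℕ) → Fin N → Fin N → Prop)
    (hEG : ∀ N v, ¬ EG N v v) (hEH : ∀ N v, ¬ EH N v v)
    (hmeana : ∀ N i, φ (a N i) = 0) (hmeanb : ∀ N i, φ (b N i) = 0)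
    (hvara : ∀ N i, φ (a N i * a N i) = 1) (hvarb : ∀ N i, φ (b N i * b N i) = 1)
    (hindepa : ∀ N, BMTIndepVars φ (EG N) (a N))
    (hindepb : ∀ N, BMTIndepVars φ (EH N) (b N))
    (hmom : ∀ n : ℕ, ∃ C : ℝ, ∀ N, ∀ i : Fin N, ‖φ (a N i ^ n)‖ ≤ C ∧ ‖φ (b N i ^ n)‖ ≤ C)
    (hsym : Tendsto (fun N : ℕ =>
        ((Finset.univ.filter fun p : Fin N × Fin N =>
            (EG N p.1 p.2 ∧ ¬ EH N p.1 p.2) ∨ (¬ EG N p.1 p.2 ∧ EH N p.1 p.2)).card : ℝ)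
          / (N : ℝ) ^ 2) atTop (nhds 0)) :
    ∀ m : ℕ, 1 ≤ m →
      Tendsto (fun N : ℕ =>
          φ ((∑ i : Fin N, a N i) ^ m) / ((Real.sqrt N : ℝ) : ℂ) ^ m
            - φ ((∑ i : Fin N, b N i) ^ m) / ((Real.sqrt N : ℝ) : ℂ) ^ m)
        atTop (nhds 0) := by
  intro m hm
  classical
  have hm' : 0 < m := hm
  -- uniform moment bound
  choose C hC using hmom
  set D : ℝ := 1 + ∑ n ∈ Finset.range (m + 1), max (C n) 0 with hDdef
  have hD1 : 1 ≤ D :=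
    le_add_of_nonneg_right (Finset.sum_nonneg fun n _ => le_max_right _ _)
  have hsumD : ∀ n, n ≤ m → C n ≤ D := by
    intro n hn
    have h1 : max (C n) 0 ≤ ∑ k ∈ Finset.range (m + 1), max (C k) 0 :=
      Finset.single_le_sum (fun k _ => le_max_right (C k) 0)
        (Finset.mem_range.mpr (by omega))
    calc C n ≤ max (C n) 0 := le_max_left _ _
      _ ≤ ∑ k ∈ Finset.range (m + 1), max (C k) 0 := h1
      _ ≤ D := by rw [hDdef]; linarith
  have hDa : ∀ (N : ℕ) (i : Fin N) (n : ℕ), n ≤ m → ‖φ (a N i ^ n)‖ ≤ D :=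
    fun N i n hn => le_trans (hC n N i).1 (hsumD n hn)
  have hDb : ∀ (N : ℕ) (i : Fin N) (n : ℕ), n ≤ m → ‖φ (b N i ^ n)‖ ≤ D :=
    fun N i n hn => le_trans (hC n N i).2 (hsumD n hn)
  set s₁ : ℕ := (m - 1) / 2 with hs₁def
  set s₂ : ℕ := m / 2 with hs₂def
  set K₁ : ℝ := (((s₁ + 1) * s₁ ^ m : ℕ) : ℝ) with hK₁def
  set K₂ : ℝ := (((s₂ + 1) * s₂ ^ m : ℕ) : ℝ) with hK₂def
  set Δ : (N : ℕ) → Finset (Fin N × Fin N) := fun N =>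
    Finset.univ.filter fun p : Fin N × Fin N =>
      (EG N p.1 p.2 ∧ ¬ EH N p.1 p.2) ∨ (¬ EG N p.1 p.2 ∧ EH N p.1 p.2) with hΔdef
  have hΔmem : ∀ (N : ℕ) (p : Fin N × Fin N), p ∈ Δ N ↔
      ((EG N p.1 p.2 ∧ ¬ EH N p.1 p.2) ∨ (¬ EG N p.1 p.2 ∧ EH N p.1 p.2)) := by
    intro N p
    rw [hΔdef]
    simp
  have hsymΔ : Filter.Tendsto (fun N : ℕ => ((Δ N).card : ℝ) / (N : ℝ) ^ 2)
      Filter.atTop (nhds 0) := by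
    simpa [hΔdef] using hsym
  have hK₁eq : K₁ = ((s₁ : ℝ) + 1) * (s₁ : ℝ) ^ m := by rw [hK₁def]; push_cast; ring
  have hK₂eq : K₂ = ((s₂ : ℝ) + 1) * (s₂ : ℝ) ^ m := by rw [hK₂def]; push_cast; ring
  have hK₁nn : 0 ≤ K₁ := by rw [hK₁def]; positivity
  have hK₂nn : 0 ≤ K₂ := by rw [hK₂def]; positivity
  clear_value Δ D K₁ K₂
  apply squeeze_zero_norm' (a := fun N : ℕ =>
    2 * K₂ * (((Δ N).card : ℝ) / (N : ℝ) ^ 2) + 2 * (K₁ * D ^ m / Real.sqrt N))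
  · -- the eventual bound
    filter_upwards [Filter.eventually_ge_atTop 1] with N hN
    have hsqpos : 0 < Real.sqrt N ^ m := sqrt_pow_pos hN m
    set gG : ℕ := (goodSet (EG N) m).card with hgGdef
    set gH : ℕ := (goodSet (EH N) m).card with hgHdef
    set SA : ℂ := ∑ idx ∈ badSet (EG N) m, termVal φ (EG N) (a N) idx with hSAdef
    set SB : ℂ := ∑ idx ∈ badSet (EH N) m, termVal φ (EH N) (b N) idx with hSBdef
    have hdecA : φ ((∑ i, a N i) ^ m) = (gG : ℂ) + SA :=
      moment_decomp φ (EG N) (a N) (hindepa N) hm' (hmeana N) (hvara N)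
    have hdecB : φ ((∑ i, b N i) ^ m) = (gH : ℂ) + SB :=
      moment_decomp φ (EH N) (b N) (hindepb N) hm' (hmeanb N) (hvarb N)
    have hcnorm : ‖((Real.sqrt N : ℝ) : ℂ) ^ m‖ = Real.sqrt N ^ m := by
      rw [norm_pow, Complex.norm_real, Real.norm_eq_abs,
        abs_of_nonneg (Real.sqrt_nonneg _)]
    have hexpr : φ ((∑ i, a N i) ^ m) / ((Real.sqrt N : ℝ) : ℂ) ^ m
        - φ ((∑ i, b N i) ^ m) / ((Real.sqrt N : ℝ) : ℂ) ^ m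
        = (((gG : ℂ) - gH) + (SA - SB)) / ((Real.sqrt N : ℝ) : ℂ) ^ m := by
      rw [hdecA, hdecB, div_sub_div_same]
      ring_nf
    rw [hexpr, norm_div, hcnorm]
    have hnum : ‖((gG : ℂ) - gH) + (SA - SB)‖ ≤ ‖(gG : ℂ) - gH‖ + (‖SA‖ + ‖SB‖) :=
      le_trans (norm_add_le _ _) (by gcongr; exact norm_sub_le _ _)
    calc ‖((gG : ℂ) - gH) + (SA - SB)‖ / Real.sqrt N ^ m
        ≤ (‖(gG : ℂ) - gH‖ + (‖SA‖ + ‖SB‖)) / Real.sqrt N ^ m := by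
          gcongr
      _ = ‖(gG : ℂ) - gH‖ / Real.sqrt N ^ m + (‖SA‖ + ‖SB‖) / Real.sqrt N ^ m := add_div _ _ _
      _ ≤ 2 * K₂ * (((Δ N).card : ℝ) / (N : ℝ) ^ 2) + 2 * (K₁ * D ^ m / Real.sqrt N) := by
          apply add_le_add
          · -- good part
            have habs : ‖(↑gG - ↑gH : ℂ)‖ = |(gG : ℝ) - (gH : ℝ)| := by
              rw [show ((gG : ℂ) - gH) = (((gG : ℝ) - gH : ℝ) : ℂ) by push_cast; ring,
                Complex.norm_real, Real.norm_eq_abs]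
            rw [habs]
            have hRHSnn : 0 ≤ 2 * K₂ * (((Δ N).card : ℝ) / (N : ℝ) ^ 2) := by
              apply mul_nonneg (by linarith) (by positivity)
            by_cases hmodd : m % 2 = 1
            · have hempty : ∀ E : Fin N → Fin N → Prop, goodSet E m = ∅ := by
                intro E
                apply Finset.eq_empty_of_forall_notMem
                intro idx hidx
                have := (Finset.mem_filter.mp hidx).2.2
                omega
              have hg0 : gG = 0 := by rw [hgGdef, hempty (EG N)]; simp
              have hh0 : gH = 0 := by rw [hgHdef, hempty (EH N)]; simp
              rw [hg0, hh0]
              simp only [Nat.cast_zero, sub_self, abs_zero, zero_div]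
              exact hRHSnn
            · by_cases hm2 : m = 2
              · have : gG = gH := by
                  rw [hgGdef, hgHdef]
                  subst hm2
                  rw [goodSet_m2 (EG N) (EH N)]
                rw [this]
                simp only [sub_self, abs_zero, zero_div]
                exact hRHSnn
              · -- even m ≥ 4
                have hs₂m : 2 * s₂ = m := by omega
                have hs₂2 : 2 ≤ s₂ := by omega
                have hΔ1 : ∀ u v : Fin N, u ≠ v → EG N u v → ¬ EH N u v → (u, v) ∈ Δ N := by
                  intro u v _ h1 h2
                  exact (hΔmem N (u, v)).mpr (Or.inl ⟨h1, h2⟩)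
                have hΔ2 : ∀ u v : Fin N, u ≠ v → EH N u v → ¬ EG N u v → (u, v) ∈ Δ N := by
                  intro u v _ h1 h2
                  exact (hΔmem N (u, v)).mpr (Or.inr ⟨h2, h1⟩)
                have hΔne : ∀ p ∈ Δ N, p.1 ≠ p.2 := by
                  intro p hp heq
                  rcases (hΔmem N p).mp hp with ⟨h1, -⟩ | ⟨-, h2⟩
                  · rw [heq] at h1; exact hEG N p.2 h1
                  · rw [heq] at h2; exact hEH N p.2 h2
                have h1 := goodSet_sdiff_card hm' hN (Δ N) hΔ1 hΔne
                have h2 := goodSet_sdiff_card hm' hN (Δ N) hΔ2 hΔne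
                have hc1 : gG ≤ (goodSet (EG N) m \ goodSet (EH N) m).card + gH :=
                  Finset.card_le_card_sdiff_add_card
                have hc2 : gH ≤ (goodSet (EH N) m \ goodSet (EG N) m).card + gG :=
                  Finset.card_le_card_sdiff_add_card
                have habsle : |(gG : ℝ) - gH| ≤
                    (2 * K₂ * (Δ N).card) * (N : ℝ) ^ (s₂ - 2) := by
                  rw [abs_sub_le_iff]
                  constructor
                  · have : (gG : ℝ) ≤ ((goodSet (EG N) m \ goodSet (EH N) m).card : ℝ) + gH := by
                      exact_mod_cast hc1
                    have hb1 : ((goodSet (EG N) m \ goodSet (EH N) m).card : ℝ)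
                        ≤ ((Δ N).card : ℝ) * ((s₂ + 1) * (N : ℝ) ^ (s₂ - 2) * s₂ ^ m) := by
                      exact_mod_cast Nat.cast_le.mpr h1
                    have hKeq : ((Δ N).card : ℝ) * ((s₂ + 1) * (N : ℝ) ^ (s₂ - 2) * s₂ ^ m)
                        ≤ (2 * K₂ * (Δ N).card) * (N : ℝ) ^ (s₂ - 2) := by
                      rw [hK₂eq]
                      nlinarith [mul_nonneg (Nat.cast_nonneg (α := ℝ) (Δ N).card)
                        (by positivity : (0:ℝ) ≤ ((s₂:ℝ) + 1) * (N : ℝ) ^ (s₂ - 2) * (s₂:ℝ) ^ m)]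
                    linarith
                  · have : (gH : ℝ) ≤ ((goodSet (EH N) m \ goodSet (EG N) m).card : ℝ) + gG := by
                      exact_mod_cast hc2
                    have hb1 : ((goodSet (EH N) m \ goodSet (EG N) m).card : ℝ)
                        ≤ ((Δ N).card : ℝ) * ((s₂ + 1) * (N : ℝ) ^ (s₂ - 2) * s₂ ^ m) := by
                      exact_mod_cast Nat.cast_le.mpr h2
                    have hKeq : ((Δ N).card : ℝ) * ((s₂ + 1) * (N : ℝ) ^ (s₂ - 2) * s₂ ^ m)
                        ≤ (2 * K₂ * (Δ N).card) * (N : ℝ) ^ (s₂ - 2) := by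
                      rw [hK₂eq]
                      nlinarith [mul_nonneg (Nat.cast_nonneg (α := ℝ) (Δ N).card)
                        (by positivity : (0:ℝ) ≤ ((s₂:ℝ) + 1) * (N : ℝ) ^ (s₂ - 2) * (s₂:ℝ) ^ m)]
                    linarith
                have := ratio_good hN hs₂m hs₂2 (abs_nonneg _)
                  (by positivity) habsle
                calc |(gG : ℝ) - gH| / Real.sqrt N ^ m
                    ≤ (2 * K₂ * (Δ N).card) / (N : ℝ) ^ 2 := this
                  _ = 2 * K₂ * (((Δ N).card : ℝ) / (N : ℝ) ^ 2) := by ring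
          · -- bad part
            have hs₁m : 2 * s₁ + 1 ≤ m := by omega
            have hSAle : ‖SA‖ ≤ K₁ * (N : ℝ) ^ s₁ * D ^ m := by
              calc ‖SA‖ ≤ (((m - 1) / 2 + 1) * N ^ ((m - 1) / 2) * ((m - 1) / 2) ^ m : ℕ) * D ^ m :=
                    bad_sum_bound φ (EG N) (a N) hN hm' hD1 (fun i n hn => hDa N i n hn)
                _ = K₁ * (N : ℝ) ^ s₁ * D ^ m := by
                    rw [hK₁eq, ← hs₁def]
                    push_cast
                    ring
            have hSBle : ‖SB‖ ≤ K₁ * (N : ℝ) ^ s₁ * D ^ m := by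
              calc ‖SB‖ ≤ (((m - 1) / 2 + 1) * N ^ ((m - 1) / 2) * ((m - 1) / 2) ^ m : ℕ) * D ^ m :=
                    bad_sum_bound φ (EH N) (b N) hN hm' hD1 (fun i n hn => hDb N i n hn)
                _ = K₁ * (N : ℝ) ^ s₁ * D ^ m := by
                    rw [hK₁eq, ← hs₁def]
                    push_cast
                    ring
            have r1 := ratio_bad hN hs₁m (norm_nonneg SA) hK₁nn hD1 hSAle
            have r2 := ratio_bad hN hs₁m (norm_nonneg SB) hK₁nn hD1 hSBle
            calc (‖SA‖ + ‖SB‖) / Real.sqrt N ^ m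
                = ‖SA‖ / Real.sqrt N ^ m + ‖SB‖ / Real.sqrt N ^ m := add_div _ _ _
              _ ≤ K₁ * D ^ m / Real.sqrt N + K₁ * D ^ m / Real.sqrt N := add_le_add r1 r2
              _ = 2 * (K₁ * D ^ m / Real.sqrt N) := by ring
  · -- the bound tends to zero
    have h1 : Filter.Tendsto (fun N : ℕ => 2 * K₂ * (((Δ N).card : ℝ) / (N : ℝ) ^ 2))
        Filter.atTop (nhds 0) := by
      have := hsymΔ.const_mul (2 * K₂)
      simpa [mul_zero] using this
    have h2 : Filter.Tendsto (fun N : ℕ => 2 * (K₁ * D ^ m / Real.sqrt N))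
        Filter.atTop (nhds 0) := by
      have := tendsto_inv_sqrt.const_mul (2 * (K₁ * D ^ m))
      simp only [mul_zero] at this
      apply this.congr
      intro N
      rw [div_eq_mul_inv]
      ring
    simpa using h1.add h2

end
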